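/- Suppose the standard ABC posterior measures Π_ε_n(· | y) concentrate on a point θ_0, i.e. for every open neighborhood U of θ_0, Π_ε_n(U^c | y) → 0 in probability as n → ∞. Suppose further that the pre-filtering defect a_{L,n} = ∫ π_{ε_n}(θ)(1 - Q_n(θ)) dθ → 0, where Q_n : Θ → [0,1] is measurable and the multifidelity posterior is π_{ε_n, ε̃_n}(θ) ∝ π_{ε_n}(θ) Q_n(θ). Then Π_{ε_n, ε̃_n}(U^c | y) → 0 in probability as well; that is, the multifidelity ABC posterior inherits posterior concentration at θ_0. -/

import Mathlib

open MeasureTheory Filter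

/-- Theorem 1 (essential content): posterior concentration is inherited by the
multifidelity ABC posterior.  The data are random (`ω ∼ P`); `πn n ω` is the standard
ABC posterior density at tolerance `ε_n`, which concentrates at `θ₀` in probability;
`Qn n` is the measurable low-fidelity survival probability with pre-filtering defect
`a n ω = ∫ πn n ω (1 - Qn n) dν → 0` in probability; the multifidelity posterior has
density `πn n ω · Qn n / (1 - a n ω)`.  Then the multifidelity posterior mass of the
complement of every open neighborhood of `θ₀` also tends to `0` in probability. -/
theorem multifidelity_posterior_concentration
    {Ω Θ : Type*} [MeasurableSpace Ω] [MeasurableSpace Θ] [TopologicalSpace Θ]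
    (P : Measure Ω) [IsProbabilityMeasure P] (ν : Measure Θ) (θ₀ : Θ)
    (πn : ℕ → Ω → Θ → ℝ) (Qn : ℕ → Θ → ℝ) (a : ℕ → Ω → ℝ)
    (hπ_nonneg : ∀ n ω θ, 0 ≤ πn n ω θ)
    (hπ_prob : ∀ n ω, ∫ θ, πn n ω θ ∂ν = 1)
    (hπ_int : ∀ n ω, Integrable (πn n ω) ν)
    (hQ_meas : ∀ n, Measurable (Qn n))
    (hQ0 : ∀ n θ, 0 ≤ Qn n θ) (hQ1 : ∀ n θ, Qn n θ ≤ 1)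
    (ha : ∀ n ω, a n ω = ∫ θ, πn n ω θ * (1 - Qn n θ) ∂ν)
    (ha1 : ∀ n ω, a n ω < 1)
    (hconc : ∀ U : Set Θ, IsOpen U → θ₀ ∈ U → ∀ δ > 0,
      Tendsto (fun n => (P {ω | δ < ∫ θ in Uᶜ, πn n ω θ ∂ν}).toReal) atTop (nhds 0))
    (ha0 : ∀ δ > 0,
      Tendsto (fun n => (P {ω | δ < a n ω}).toReal) atTop (nhds 0)) :
    ∀ U : Set Θ, IsOpen U → θ₀ ∈ U → ∀ δ > 0,
      Tendsto (fun n =>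
          (P {ω | δ < ∫ θ in Uᶜ, πn n ω θ * Qn n θ / (1 - a n ω) ∂ν}).toReal)
        atTop (nhds 0) := by
  intro U hU hθU δ hδ
  -- notation
  set I : ℕ → Ω → ℝ := fun n ω => ∫ θ in Uᶜ, πn n ω θ ∂ν with hI
  have h0a : ∀ n ω, 0 ≤ a n ω := by
    intro n ω
    rw [ha]
    exact integral_nonneg fun θ => mul_nonneg (hπ_nonneg n ω θ) (by linarith [hQ1 n θ])
  have hI0 : ∀ n ω, 0 ≤ I n ω := fun n ω =>
    integral_nonneg fun θ => hπ_nonneg n ω θ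
  have hI1 : ∀ n ω, I n ω ≤ 1 := by
    intro n ω
    calc I n ω ≤ ∫ θ, πn n ω θ ∂ν :=
          setIntegral_le_integral (hπ_int n ω)
            (Eventually.of_forall fun θ => hπ_nonneg n ω θ)
      _ = 1 := hπ_prob n ω
  -- key pointwise bound
  have key : ∀ n ω, a n ω ≤ 1/2 →
      (∫ θ in Uᶜ, πn n ω θ * Qn n θ / (1 - a n ω) ∂ν) ≤ I n ω + 2 * a n ω := by
    intro n ω hA
    have hpos : 0 < 1 - a n ω := by linarith [ha1 n ω]
    have hQint : Integrable (fun θ => πn n ω θ * Qn n θ) (ν.restrict Uᶜ) := by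
      have h := ((hπ_int n ω).restrict (s := Uᶜ)).bdd_mul
        ((hQ_meas n).aestronglyMeasurable) (c := 1) (Eventually.of_forall fun θ => by
          rw [Real.norm_eq_abs, abs_le]; constructor <;> [linarith [hQ0 n θ]; exact hQ1 n θ])
      exact h.congr (Eventually.of_forall fun θ => mul_comm _ _)
    have h1 : (∫ θ in Uᶜ, πn n ω θ * Qn n θ ∂ν) ≤ I n ω :=
      integral_mono hQint ((hπ_int n ω).restrict)
        (fun θ => mul_le_of_le_one_right (hπ_nonneg n ω θ) (hQ1 n θ))
    have h2 : 0 ≤ ∫ θ in Uᶜ, πn n ω θ * Qn n θ ∂ν :=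
      integral_nonneg fun θ => mul_nonneg (hπ_nonneg n ω θ) (hQ0 n θ)
    rw [integral_div, div_le_iff₀ hpos]
    nlinarith [hI1 n ω, hI0 n ω, h0a n ω]
  -- event inclusion
  set c : ℝ := min (1/2) (δ/4) with hc
  have hcpos : 0 < c := by positivity
  have hsub : ∀ n, {ω | δ < ∫ θ in Uᶜ, πn n ω θ * Qn n θ / (1 - a n ω) ∂ν} ⊆
      {ω | δ/2 < I n ω} ∪ {ω | c < a n ω} := by
    intro n ω hω
    by_contra hcon
    simp only [Set.mem_union, Set.mem_setOf_eq, not_or, not_lt] at hcon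
    obtain ⟨h1, h2⟩ := hcon
    have hA : a n ω ≤ 1/2 := le_trans h2 (min_le_left _ _)
    have hA4 : a n ω ≤ δ/4 := le_trans h2 (min_le_right _ _)
    have := key n ω hA
    simp only [Set.mem_setOf_eq] at hω
    linarith
  -- bound the probabilities
  have hbound : ∀ n,
      (P {ω | δ < ∫ θ in Uᶜ, πn n ω θ * Qn n θ / (1 - a n ω) ∂ν}).toReal ≤
      (P {ω | δ/2 < I n ω}).toReal + (P {ω | c < a n ω}).toReal := by
    intro n
    calc (P {ω | δ < ∫ θ in Uᶜ, πn n ω θ * Qn n θ / (1 - a n ω) ∂ν}).toReal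
        ≤ (P ({ω | δ/2 < I n ω} ∪ {ω | c < a n ω})).toReal := by
          apply ENNReal.toReal_mono (measure_ne_top P _)
          exact measure_mono (hsub n)
      _ ≤ ((P {ω | δ/2 < I n ω}) + P {ω | c < a n ω}).toReal := by
          apply ENNReal.toReal_mono
          · exact ENNReal.add_ne_top.2 ⟨measure_ne_top P _, measure_ne_top P _⟩
          · exact measure_union_le _ _
      _ = (P {ω | δ/2 < I n ω}).toReal + (P {ω | c < a n ω}).toReal :=
          ENNReal.toReal_add (measure_ne_top P _) (measure_ne_top P _)
  have htend : Tendsto (fun n => (P {ω | δ/2 < I n ω}).toReal +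
      (P {ω | c < a n ω}).toReal) atTop (nhds 0) := by
    have := (hconc U hU hθU (δ/2) (by linarith)).add (ha0 c hcpos)
    simpa using this
  exact squeeze_zero (fun n => ENNReal.toReal_nonneg) hbound htend
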